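/- Let f and f_n (n ∈ ℕ) be globally Lipschitz concave functions E → ℝ with f_n(x) ≤ f_{n+1}(x) for all n and x. Then f_n → f in the G-norm if and only if both (a) f_n → f pointwise on E, and (b) rec(f_n) → rec(f) in the C-norm. -/

import Mathlib

open Set

noncomputable section

/-- `f` is globally Lipschitz. -/
def GloballyLipschitz (d : ℕ) (f : EuclideanSpace ℝ (Fin d) → ℝ) : Prop :=
  ∃ C : ℝ, 0 ≤ C ∧ ∀ x y, |f x - f y| ≤ C * ‖x - y‖

/-- `r` is the recession function of `f`: `r(x) = lim_{λ→∞} f(λx)/λ`. -/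
def IsRecessionFn (d : ℕ) (f r : EuclideanSpace ℝ (Fin d) → ℝ) : Prop :=
  ∀ x, Filter.Tendsto (fun t : ℝ => f (t • x) / t) Filter.atTop (nhds (r x))

section Aux

open Filter

/-- Dini-type lemma: an antitone sequence of continuous real functions tending to `0`
pointwise on a compact set is eventually uniformly small there. -/
lemma my_dini {X : Type*} [TopologicalSpace X] {K : Set X} (hK : IsCompact K)
    (g : ℕ → X → ℝ) (hc : ∀ n, Continuous (g n)) (hanti : ∀ n x, g (n + 1) x ≤ g n x)
    (hlim : ∀ x ∈ K, Tendsto (fun n => g n x) atTop (nhds 0)) {ε : ℝ} (hε : 0 < ε) :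
    ∃ N, ∀ n ≥ N, ∀ x ∈ K, g n x < ε := by
  have hA : ∀ x, Antitone fun n => g n x := fun x =>
    antitone_nat_of_succ_le fun n => hanti n x
  have hopen : ∀ n : ℕ, IsOpen {x | g n x < ε} := fun n =>
    isOpen_lt (hc n) continuous_const
  have hcov : K ⊆ ⋃ n : ℕ, {x | g n x < ε} := by
    intro x hx
    obtain ⟨n, hn⟩ := ((hlim x hx).eventually_lt_const hε).exists
    exact mem_iUnion.2 ⟨n, hn⟩
  obtain ⟨t, ht⟩ := hK.elim_finite_subcover _ hopen hcov
  refine ⟨t.sup id, fun n hn x hx => ?_⟩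
  obtain ⟨m, hm, hmx⟩ := mem_iUnion₂.1 (ht hx)
  exact lt_of_le_of_lt (hA x (le_trans (Finset.le_sup (f := id) hm) hn)) hmx

variable {E : Type*} [NormedAddCommGroup E] [NormedSpace ℝ E]

/-- For a concave function, slopes through the origin are antitone. -/
lemma slope_anti {g : E → ℝ} (hg : ConcaveOn ℝ Set.univ g) (u : E) {s t : ℝ}
    (hs : 0 < s) (hst : s ≤ t) :
    (g (t • u) - g 0) / t ≤ (g (s • u) - g 0) / s := by
  have ht : 0 < t := lt_of_lt_of_le hs hst
  have ha : (0:ℝ) ≤ s / t := by positivity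
  have hb : (0:ℝ) ≤ 1 - s / t := by
    have : s / t ≤ 1 := div_le_one_of_le₀ hst ht.le
    linarith
  have hkey := hg.2 (Set.mem_univ (t • u)) (Set.mem_univ (0 : E)) ha hb (by ring)
  have heq : (s / t) • (t • u) + (1 - s / t) • (0 : E) = s • u := by
    rw [smul_zero, add_zero, smul_smul, div_mul_cancel₀ _ ht.ne']
  rw [heq] at hkey
  simp only [smul_eq_mul] at hkey
  rw [div_le_div_iff₀ ht hs]
  have h2 := mul_le_mul_of_nonneg_left hkey ht.le
  have h3 : t * (s / t * g (t • u) + (1 - s / t) * g 0)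
      = s * g (t • u) + (t - s) * g 0 := by
    field_simp
  nlinarith [h2, h3]

/-- The recession function of a concave function is below every slope through the origin. -/
lemma rec_le_slope {g : E → ℝ} {ρ : E → ℝ} (hg : ConcaveOn ℝ Set.univ g)
    (hr : ∀ x, Tendsto (fun t : ℝ => g (t • x) / t) atTop (nhds (ρ x)))
    (u : E) {t : ℝ} (ht : 0 < t) : ρ u ≤ (g (t • u) - g 0) / t := by
  have hB : Tendsto (fun s : ℝ => (g (t • u) - g 0) / t + g 0 / s) atTop
      (nhds ((g (t • u) - g 0) / t)) := by
    have : Tendsto (fun s : ℝ => g 0 / s) atTop (nhds 0) := by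
      simpa [div_eq_mul_inv] using tendsto_inv_atTop_zero.const_mul (g 0)
    simpa using tendsto_const_nhds.add this
  refine le_of_tendsto_of_tendsto (hr u) hB ?_
  filter_upwards [eventually_ge_atTop t, eventually_gt_atTop (0:ℝ)] with s hst hs
  have h1 := slope_anti hg u ht hst
  have h2 : g (s • u) / s = (g (s • u) - g 0) / s + g 0 / s := by
    field_simp
    ring
  rw [h2]
  linarith

/-- A function satisfying a global Lipschitz bound is continuous. -/
lemma cont_of_bound {g : E → ℝ} {C : ℝ} (hC : 0 ≤ C)
    (h : ∀ x y, |g x - g y| ≤ C * ‖x - y‖) : Continuous g := by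
  have hL : LipschitzWith C.toNNReal g := by
    apply LipschitzWith.of_dist_le_mul
    intro x y
    rw [Real.dist_eq, dist_eq_norm, Real.coe_toNNReal C hC]
    exact h x y
  exact hL.continuous

/-- The recession function inherits the Lipschitz bound. -/
lemma rec_lip {g ρ : E → ℝ} {C : ℝ}
    (h : ∀ x y, |g x - g y| ≤ C * ‖x - y‖)
    (hr : ∀ x, Tendsto (fun t : ℝ => g (t • x) / t) atTop (nhds (ρ x))) :
    ∀ x y, |ρ x - ρ y| ≤ C * ‖x - y‖ := by
  intro x y
  have hA : Tendsto (fun t : ℝ => |g (t • x) / t - g (t • y) / t|) atTop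
      (nhds |ρ x - ρ y|) := ((hr x).sub (hr y)).abs
  refine le_of_tendsto hA ?_
  filter_upwards [eventually_gt_atTop (0:ℝ)] with t ht
  have h1 : |g (t • x) / t - g (t • y) / t| = |g (t • x) - g (t • y)| / t := by
    rw [div_sub_div_same, abs_div, abs_of_pos ht]
  have h2 : ‖t • x - t • y‖ = t * ‖x - y‖ := by
    rw [← smul_sub, norm_smul, Real.norm_eq_abs, abs_of_pos ht]
  rw [h1, div_le_iff₀ ht]
  calc |g (t • x) - g (t • y)| ≤ C * ‖t • x - t • y‖ := h (t • x) (t • y)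
  _ = C * ‖x - y‖ * t := by rw [h2]; ring

end Aux

/-- For an increasing sequence of globally Lipschitz concave functions `f_n` and a globally
Lipschitz concave `f`, convergence `f_n → f` in the G-norm holds iff `f_n → f` pointwise
and the recession functions converge in the C-norm. -/
theorem stmt_10 (d : ℕ) (hd : 1 ≤ d)
    (f : EuclideanSpace ℝ (Fin d) → ℝ) (fn : ℕ → EuclideanSpace ℝ (Fin d) → ℝ)
    (r : EuclideanSpace ℝ (Fin d) → ℝ) (rn : ℕ → EuclideanSpace ℝ (Fin d) → ℝ)
    (hf : ConcaveOn ℝ Set.univ f) (hfL : GloballyLipschitz d f)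
    (hfn : ∀ n, ConcaveOn ℝ Set.univ (fn n)) (hfnL : ∀ n, GloballyLipschitz d (fn n))
    (hmono : ∀ n x, fn n x ≤ fn (n + 1) x)
    (hr : IsRecessionFn d f r) (hrn : ∀ n, IsRecessionFn d (fn n) (rn n)) :
    (∀ ε : ℝ, 0 < ε → ∃ N : ℕ, ∀ n ≥ N, ∀ x, |fn n x - f x| ≤ ε * (1 + ‖x‖)) ↔
      ((∀ x, Filter.Tendsto (fun n => fn n x) Filter.atTop (nhds (f x))) ∧
        (∀ ε : ℝ, 0 < ε → ∃ N : ℕ, ∀ n ≥ N, ∀ x, |rn n x - r x| ≤ ε * ‖x‖)) := by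
  classical
  obtain ⟨C, hC0, hCf⟩ := hfL
  have hfcont : Continuous f := cont_of_bound hC0 hCf
  have hrlip : ∀ x y, |r x - r y| ≤ C * ‖x - y‖ := rec_lip hCf hr
  have hrcont : Continuous r := cont_of_bound hC0 hrlip
  have hfncont : ∀ n, Continuous (fn n) := fun n => by
    obtain ⟨Cn, h1, h2⟩ := hfnL n; exact cont_of_bound h1 h2
  have hmono' : ∀ x, Monotone fun m => fn m x := fun x =>
    monotone_nat_of_le_succ fun m => hmono m x
  constructor
  · -- G-norm convergence implies pointwise + C-norm recession convergence
    intro hG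
    constructor
    · intro x
      rw [Metric.tendsto_atTop]
      intro ε hε
      have hx : (0:ℝ) < 1 + ‖x‖ := by positivity
      obtain ⟨N, hN⟩ := hG (ε / (2 * (1 + ‖x‖))) (by positivity)
      refine ⟨N, fun n hn => ?_⟩
      have h1 := hN n hn x
      have heq : ε / (2 * (1 + ‖x‖)) * (1 + ‖x‖) = ε / 2 := by
        field_simp
      rw [Real.dist_eq]
      calc |fn n x - f x| ≤ ε / (2 * (1 + ‖x‖)) * (1 + ‖x‖) := h1
      _ = ε / 2 := heq
      _ < ε := by linarith
    · intro ε hε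
      obtain ⟨N, hN⟩ := hG ε hε
      refine ⟨N, fun n hn x => ?_⟩
      have hA : Filter.Tendsto (fun t : ℝ => |fn n (t • x) / t - f (t • x) / t|)
          Filter.atTop (nhds |rn n x - r x|) := ((hrn n x).sub (hr x)).abs
      have hB : Filter.Tendsto (fun t : ℝ => ε * (1 / t + ‖x‖)) Filter.atTop
          (nhds (ε * ‖x‖)) := by
        have h1 : Filter.Tendsto (fun t : ℝ => 1 / t) Filter.atTop (nhds 0) := by
          simpa using tendsto_inv_atTop_zero
        have h2 : Filter.Tendsto (fun _ : ℝ => ‖x‖) Filter.atTop (nhds ‖x‖) :=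
          tendsto_const_nhds
        have := (h1.add h2).const_mul ε
        simpa using this
      refine le_of_tendsto_of_tendsto hA hB ?_
      filter_upwards [Filter.eventually_gt_atTop (0:ℝ)] with t ht
      have h2 := hN n hn (t • x)
      have hnorm : ‖t • x‖ = t * ‖x‖ := by
        rw [norm_smul, Real.norm_eq_abs, abs_of_pos ht]
      have h3 : |fn n (t • x) / t - f (t • x) / t| = |fn n (t • x) - f (t • x)| / t := by
        rw [div_sub_div_same, abs_div, abs_of_pos ht]
      rw [h3, div_le_iff₀ ht]
      calc |fn n (t • x) - f (t • x)| ≤ ε * (1 + ‖t • x‖) := h2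
      _ = ε * (1 / t + ‖x‖) * t := by
        have e1 : (1 / t + ‖x‖) * t = 1 + t * ‖x‖ := by
          field_simp
        rw [hnorm, mul_assoc, e1]
  · -- pointwise + C-norm recession convergence implies G-norm convergence
    rintro ⟨hpt, hCn⟩
    have hle : ∀ n x, fn n x ≤ f x := by
      intro n x
      refine ge_of_tendsto (hpt x) ?_
      filter_upwards [Filter.eventually_ge_atTop n] with m hm
      exact hmono' x hm
    intro ε hε
    have hε3 : 0 < ε / 3 := by linarith
    -- uniform control of slopes on the sphere (Dini)
    set g : ℕ → EuclideanSpace ℝ (Fin d) → ℝ :=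
      fun m u => (f (((m : ℝ) + 1) • u) - f 0) / ((m : ℝ) + 1) - r u with hgdef
    have hgc : ∀ m, Continuous (g m) := by
      intro m
      exact (((hfcont.comp (continuous_const_smul _)).sub continuous_const).div_const
        _).sub hrcont
    have hganti : ∀ m u, g (m + 1) u ≤ g m u := by
      intro m u
      have h1 : (f (((m : ℝ) + 2) • u) - f 0) / ((m : ℝ) + 2)
          ≤ (f (((m : ℝ) + 1) • u) - f 0) / ((m : ℝ) + 1) :=
        slope_anti hf u (by positivity) (by linarith)
      have h2 : ((m + 1 : ℕ) : ℝ) + 1 = (m : ℝ) + 2 := by push_cast; ring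
      simp only [hgdef, h2]
      linarith
    have hglim : ∀ u ∈ Metric.sphere (0 : EuclideanSpace ℝ (Fin d)) 1,
        Filter.Tendsto (fun m => g m u) Filter.atTop (nhds 0) := by
      intro u _
      have hnat : Filter.Tendsto (fun m : ℕ => ((m : ℝ) + 1)) Filter.atTop
          Filter.atTop :=
        Filter.tendsto_atTop_add_const_right _ 1 tendsto_natCast_atTop_atTop
      have h1 : Filter.Tendsto (fun m : ℕ => f (((m : ℝ) + 1) • u) / ((m : ℝ) + 1))
          Filter.atTop (nhds (r u)) := (hr u).comp hnat
      have h2 : Filter.Tendsto (fun m : ℕ => f 0 / ((m : ℝ) + 1)) Filter.atTop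
          (nhds 0) := by
        have := tendsto_inv_atTop_zero.comp hnat
        have h3 := this.const_mul (f 0)
        simpa [div_eq_mul_inv, Function.comp] using h3
      have h4 := (h1.sub h2).sub_const (r u)
      simp only [sub_zero, sub_self] at h4
      have h5 : ∀ m : ℕ, g m u = f (((m : ℝ) + 1) • u) / ((m : ℝ) + 1)
          - f 0 / ((m : ℝ) + 1) - r u := by
        intro m
        simp only [hgdef, sub_div]
      simpa [h5] using h4
    obtain ⟨N0, hN0⟩ := my_dini (isCompact_sphere (0 : EuclideanSpace ℝ (Fin d)) 1)
      g hgc hganti hglim hε3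
    set M : ℝ := (N0 : ℝ) + 1 with hMdef
    have hM : 0 < M := by positivity
    -- uniform convergence on the ball of radius M (Dini)
    have hballlim : ∀ x ∈ Metric.closedBall (0 : EuclideanSpace ℝ (Fin d)) M,
        Filter.Tendsto (fun n => f x - fn n x) Filter.atTop (nhds 0) := by
      intro x _
      have := (hpt x).const_sub (f x)
      simpa using this
    obtain ⟨N2, hN2⟩ := my_dini (isCompact_closedBall (0 : EuclideanSpace ℝ (Fin d)) M)
      (fun n x => f x - fn n x) (fun n => hfcont.sub (hfncont n))
      (fun n x => sub_le_sub_left (hmono n x) _) hballlim hε3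
    obtain ⟨N1, hN1⟩ := hCn (ε / 3) hε3
    refine ⟨max N1 N2, fun n hn x => ?_⟩
    have hn1 : N1 ≤ n := le_trans (le_max_left _ _) hn
    have hn2 : N2 ≤ n := le_trans (le_max_right _ _) hn
    have hfx : 0 ≤ f x - fn n x := sub_nonneg.2 (hle n x)
    rw [abs_sub_comm, abs_of_nonneg hfx]
    by_cases hxM : ‖x‖ ≤ M
    · have h1 := hN2 n hn2 x (by simpa [Metric.mem_closedBall, dist_zero_right] using hxM)
      nlinarith [norm_nonneg x]
    · push_neg at hxM
      have hxpos : 0 < ‖x‖ := lt_trans hM hxM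
      set u : EuclideanSpace ℝ (Fin d) := ‖x‖⁻¹ • x with hudef
      have hu : ‖u‖ = 1 := by
        rw [hudef, norm_smul, norm_inv, norm_norm, inv_mul_cancel₀ hxpos.ne']
      have hxu : ‖x‖ • u = x := by
        rw [hudef, smul_smul, mul_inv_cancel₀ hxpos.ne', one_smul]
      -- upper bound on f x via slope at M
      have h1 : (f (‖x‖ • u) - f 0) / ‖x‖ ≤ (f (M • u) - f 0) / M :=
        slope_anti hf u hM hxM.le
      rw [hxu] at h1
      have a1 : f x - f 0 ≤ (f (M • u) - f 0) / M * ‖x‖ := (div_le_iff₀ hxpos).1 h1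
      -- lower bound on fn n x via recession function
      have h2 : rn n u ≤ (fn n (‖x‖ • u) - fn n 0) / ‖x‖ :=
        rec_le_slope (hfn n) (hrn n) u hxpos
      rw [hxu] at h2
      have a2 : rn n u * ‖x‖ ≤ fn n x - fn n 0 := (le_div_iff₀ hxpos).1 h2
      -- slope at M close to r u
      have a3 : (f (M • u) - f 0) / M - r u < ε / 3 := by
        have := hN0 N0 le_rfl u (by simpa [mem_sphere_iff_norm] using hu)
        simpa [hgdef, hMdef] using this
      -- rn n u close to r u
      have a4 : r u - rn n u ≤ ε / 3 := by
        have := hN1 n hn1 u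
        rw [hu, mul_one] at this
        have := abs_le.1 this
        linarith [this.1]
      -- value at 0 close
      have a5 : f 0 - fn n 0 < ε / 3 := hN2 n hn2 0 (by
        simp [Metric.mem_closedBall, hM.le])
      have key : (f (M • u) - f 0) / M - rn n u ≤ 2 * (ε / 3) := by linarith
      have key2 : ((f (M • u) - f 0) / M - rn n u) * ‖x‖ ≤ 2 * (ε / 3) * ‖x‖ :=
        mul_le_mul_of_nonneg_right key (norm_nonneg x)
      nlinarith [a1, a2, a5, key2, norm_nonneg x, hε, mul_nonneg hε.le (norm_nonneg x)]
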